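/- Let m ∈ ℕ, let A be a skew-Hermitian m×m complex matrix, let B be an m×m complex matrix, and define Θ(t) = exp(−tA)·B·exp(tA). Let T > 0, C > 0, let u : [0,T] → ℝ be piecewise constant, and let (w_k)_{k∈ℕ} be piecewise constant functions w_k : [0,T] → ℝ with |w_k(t)| ≤ C for all k and t, such that ∫_0^t w_k(s) ds → ∫_0^t u(s) ds as k → ∞ uniformly for t ∈ [0,T]. Then ∫_0^t w_k(s)Θ(s) ds → ∫_0^t u(s)Θ(s) ds as k → ∞, uniformly for t ∈ [0,T], in the operator norm on m×m complex matrices. -/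

import Mathlib

open MeasureTheory


open scoped Matrix.Norms.L2Operator

/-- A function `f` is piecewise constant on `[0,T]` if there is a finite partition
`0 = t_0 < t_1 < … < t_m = T` such that `f` is constant on each interval `[t_{j-1}, t_j)`. -/
def PiecewiseConstOn (f : ℝ → ℝ) (T : ℝ) : Prop :=
  ∃ (m : ℕ) (t : ℕ → ℝ), 0 < m ∧ t 0 = 0 ∧ t m = T ∧
    (∀ j < m, t j < t (j + 1)) ∧
    ∀ j < m, ∀ x ∈ Set.Ico (t j) (t (j + 1)), f x = f (t j)

lemma partition_mono {n : ℕ} {t : ℕ → ℝ} (hlt : ∀ j < n, t j < t (j+1)) :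
    ∀ {j k : ℕ}, j ≤ k → k ≤ n → t j ≤ t k := by
  intro j k hjk hk
  induction k, hjk using Nat.le_induction with
  | base => exact le_rfl
  | succ k hjk ih => exact (ih (by omega)).trans (hlt k (by omega)).le

lemma exists_piece {T : ℝ} {n : ℕ} {t : ℕ → ℝ} (h0 : t 0 = 0) (hTn : t n = T)
    (hlt : ∀ j < n, t j < t (j+1)) {s : ℝ} (hs0 : 0 ≤ s) (hsT : s < T) :
    ∃ j < n, t j ≤ s ∧ s < t (j+1) := by
  classical
  set P := fun i => t i ≤ s with hP
  have hP0 : P 0 := by simp [hP, h0, hs0]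
  set j := Nat.findGreatest P n with hj
  have hPj : P j := Nat.findGreatest_spec (Nat.zero_le n) hP0
  have hjn : j ≤ n := Nat.findGreatest_le n
  have hjlt : j < n := by
    rcases lt_or_eq_of_le hjn with h | h
    · exact h
    · exfalso
      have := hPj
      rw [h] at this
      simp only [hP, hTn] at this
      linarith
  refine ⟨j, hjlt, hPj, ?_⟩
  have hnot : ¬ P (j+1) := Nat.findGreatest_is_greatest (Nat.lt_succ_self _) hjlt
  exact not_le.mp hnot

lemma PiecewiseConstOn.integrableOn_Icc {f : ℝ → ℝ} {T : ℝ}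
    (hf : PiecewiseConstOn f T) : IntegrableOn f (Set.Icc 0 T) volume := by
  obtain ⟨n, t, hn, h0, hTn, hlt, hc⟩ := hf
  have hmono : ∀ {j k : ℕ}, j ≤ k → k ≤ n → t j ≤ t k := fun h1 h2 => partition_mono hlt h1 h2
  have hcover : Set.Ico (0:ℝ) T = ⋃ j ∈ Finset.range n, Set.Ico (t j) (t (j+1)) := by
    ext s
    simp only [Set.mem_iUnion, Finset.mem_range, Set.mem_Ico, exists_prop]
    constructor
    · rintro ⟨hs0, hsT⟩
      obtain ⟨j, hj, h1, h2⟩ := exists_piece h0 hTn hlt hs0 hsT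
      exact ⟨j, hj, h1, h2⟩
    · rintro ⟨j, hj, h1, h2⟩
      refine ⟨?_, ?_⟩
      · calc (0:ℝ) = t 0 := h0.symm
          _ ≤ t j := hmono (Nat.zero_le j) hj.le
          _ ≤ s := h1
      · calc s < t (j+1) := h2
          _ ≤ t n := hmono hj (le_refl n)
          _ = T := hTn
  have hIco : IntegrableOn f (Set.Ico 0 T) volume := by
    rw [hcover, integrableOn_finset_iUnion]
    intro j hj
    rw [Finset.mem_range] at hj
    have heq : Set.EqOn f (fun _ => f (t j)) (Set.Ico (t j) (t (j+1))) :=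
      fun x hx => hc j hj x hx
    rw [integrableOn_congr_fun heq measurableSet_Ico]
    exact integrableOn_const measure_Ico_lt_top.ne
  rwa [integrableOn_Icc_iff_integrableOn_Ico]

lemma PiecewiseConstOn.intervalIntegrable' {f : ℝ → ℝ} {T : ℝ} (hT : 0 ≤ T)
    (hf : PiecewiseConstOn f T) {a b : ℝ} (ha : a ∈ Set.Icc 0 T) (hb : b ∈ Set.Icc 0 T) :
    IntervalIntegrable f volume a b := by
  have h := hf.integrableOn_Icc
  have hsub : Set.uIcc a b ⊆ Set.Icc 0 T := by
    rw [← Set.uIcc_of_le hT]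
    exact Set.uIcc_subset_uIcc (by rwa [Set.uIcc_of_le hT]) (by rwa [Set.uIcc_of_le hT])
  exact (h.mono_set hsub).intervalIntegrable

lemma PiecewiseConstOn.bounded {f : ℝ → ℝ} {T : ℝ} (hf : PiecewiseConstOn f T) :
    ∃ Cf : ℝ, 0 ≤ Cf ∧ ∀ s ∈ Set.Icc (0:ℝ) T, |f s| ≤ Cf := by
  obtain ⟨n, t, hn, h0, hTn, hlt, hc⟩ := hf
  have hne : (Finset.range n).Nonempty := Finset.nonempty_range_iff.mpr hn.ne'
  set Cf := max |f T| ((Finset.range n).sup' hne fun j => |f (t j)|) with hCf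
  refine ⟨Cf, le_trans (abs_nonneg _) (le_max_left _ _), ?_⟩
  intro s hs
  rcases eq_or_lt_of_le hs.2 with h | h
  · rw [h]; exact le_max_left _ _
  · obtain ⟨j, hj, h1, h2⟩ := exists_piece h0 hTn hlt hs.1 h
    rw [hc j hj s ⟨h1, h2⟩]
    exact le_trans (Finset.le_sup' (fun j => |f (t j)|) (Finset.mem_range.mpr hj)) (le_max_right _ _)

lemma smulIntegrable {E : Type*} [NormedAddCommGroup E] [NormedSpace ℝ E]
    {f : ℝ → ℝ} {g : ℝ → E} {a b : ℝ} (hf : IntervalIntegrable f volume a b)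
    (hg : ContinuousOn g (Set.uIcc a b)) :
    IntervalIntegrable (fun x => f x • g x) volume a b := by
  rcases le_total a b with h | h
  · rw [intervalIntegrable_iff_integrableOn_Icc_of_le h] at hf ⊢
    exact hf.smul_continuousOn (by rwa [Set.uIcc_of_le h] at hg) isCompact_Icc
  · apply IntervalIntegrable.symm
    rw [intervalIntegrable_iff_integrableOn_Icc_of_le h]
    rw [Set.uIcc_comm] at hg
    exact (hf.symm |> (intervalIntegrable_iff_integrableOn_Icc_of_le h).mp).smul_continuousOn
      (by rwa [Set.uIcc_of_le h] at hg) isCompact_Icc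


/-- if the primitives of `w_k` converge uniformly to the primitive of `u`,
then `∫_0^t w_k Θ → ∫_0^t u Θ` uniformly on `[0,T]`, where `Θ(t) = exp(-tA) B exp(tA)`,
`A` is skew-Hermitian, and matrices carry the operator norm. -/
theorem integral_control_matrix_convergence
    (m : ℕ) (A B : Matrix (Fin m) (Fin m) ℂ)
    (hA : A.conjTranspose = -A)
    (Θ : ℝ → Matrix (Fin m) (Fin m) ℂ)
    (hΘ : ∀ t : ℝ, Θ t = NormedSpace.exp ((-t) • A) * B * NormedSpace.exp (t • A))
    (T : ℝ) (hT : 0 < T) (C : ℝ) (hC : 0 < C)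
    (u : ℝ → ℝ) (hu : PiecewiseConstOn u T)
    (w : ℕ → ℝ → ℝ) (hw : ∀ k, PiecewiseConstOn (w k) T)
    (hwbound : ∀ k, ∀ t : ℝ, |w k t| ≤ C)
    (hconv : TendstoUniformlyOn (fun k t => ∫ s in (0 : ℝ)..t, w k s)
      (fun t => ∫ s in (0 : ℝ)..t, u s) Filter.atTop (Set.Icc 0 T)) :
    TendstoUniformlyOn (fun k t => ∫ s in (0 : ℝ)..t, w k s • Θ s)
      (fun t => ∫ s in (0 : ℝ)..t, u s • Θ s) Filter.atTop (Set.Icc 0 T) := by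
  have hT' : (0:ℝ) ≤ T := hT.le
  have h0mem : (0:ℝ) ∈ Set.Icc (0:ℝ) T := Set.left_mem_Icc.mpr hT'
  -- continuity of Θ
  have hΘc : Continuous Θ := by
    have hfun : Θ = fun t : ℝ =>
        NormedSpace.exp ((-t) • A) * B * NormedSpace.exp (t • A) := funext hΘ
    rw [hfun]
    letI : NormedAlgebra ℚ (Matrix (Fin m) (Fin m) ℂ) := .restrictScalars ℚ ℂ _
    have c1 : Continuous fun t : ℝ => NormedSpace.exp ((-t) • A) :=
      NormedSpace.exp_continuous.comp (continuous_neg.smul continuous_const)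
    have c2 : Continuous fun t : ℝ => NormedSpace.exp (t • A) :=
      NormedSpace.exp_continuous.comp (continuous_id.smul continuous_const)
    exact (c1.mul continuous_const).mul c2
  obtain ⟨M, hM⟩ :=
    (isCompact_Icc : IsCompact (Set.Icc (0:ℝ) T)).exists_bound_of_continuousOn hΘc.continuousOn
  have hM0 : 0 ≤ M := le_trans (norm_nonneg _) (hM 0 h0mem)
  have hUC :=
    (isCompact_Icc : IsCompact (Set.Icc (0:ℝ) T)).uniformContinuousOn_of_continuous
      hΘc.continuousOn
  rw [Metric.uniformContinuousOn_iff] at hUC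
  obtain ⟨Cu, hCu0, hCub⟩ := hu.bounded
  set D := C + Cu with hD
  have hD0 : 0 < D := by simp only [hD]; linarith
  rw [Metric.tendstoUniformlyOn_iff] at hconv ⊢
  intro ε hε
  set ε₁ := ε / (3 * (D * T + 1)) with hε₁def
  have hε₁ : 0 < ε₁ := by
    apply div_pos hε
    nlinarith
  obtain ⟨δ, hδ0, hδ⟩ := hUC ε₁ hε₁
  set N := ⌈T / δ⌉₊ + 1 with hNdef
  have hNR : (0:ℝ) < N := by positivity
  have hTN : T / N < δ := by
    rw [div_lt_iff₀ hNR]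
    have h1 : T / δ ≤ (⌈T / δ⌉₊ : ℝ) := Nat.le_ceil _
    have h2 : ((N : ℕ) : ℝ) = (⌈T / δ⌉₊ : ℝ) + 1 := by rw [hNdef]; push_cast; ring
    have h3 : T = δ * (T / δ) := by field_simp
    have h4 : δ * (T / δ) ≤ δ * (⌈T / δ⌉₊ : ℝ) := mul_le_mul_of_nonneg_left h1 hδ0.le
    have h5 : δ * ((N : ℕ) : ℝ) = δ * (⌈T / δ⌉₊ : ℝ) + δ := by rw [h2]; ring
    linarith
  have hTN0 : 0 ≤ T / N := by positivity
  set η := ε / (3 * (2 * M * N + 1)) with hηdef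
  have hη : 0 < η := by
    apply div_pos hε
    nlinarith
  filter_upwards [hconv η hη] with k hk
  intro τ hτ
  -- the subdivision
  set a : ℕ → ℝ := fun i => min ((i : ℝ) * T / N) τ with ha
  have ha0 : a 0 = 0 := by
    simp only [ha, Nat.cast_zero, zero_mul, zero_div]
    exact min_eq_left hτ.1
  have haN : a N = τ := by
    have hNT : ((N : ℕ) : ℝ) * T / N = T := by field_simp
    simp only [ha, hNT]
    exact min_eq_right hτ.2
  have hamono : ∀ i : ℕ, a i ≤ a (i + 1) := by
    intro i
    apply min_le_min _ le_rfl
    apply div_le_div_of_nonneg_right ?_ hNR.le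
    push_cast
    nlinarith
  have habound : ∀ i : ℕ, a i ∈ Set.Icc (0:ℝ) T := by
    intro i
    constructor
    · exact le_min (by positivity) hτ.1
    · exact le_trans (min_le_right _ _) hτ.2
  have halen : ∀ i : ℕ, a (i + 1) - a i ≤ T / N := by
    intro i
    have h1 : (((i : ℕ) + 1 : ℕ) : ℝ) * T / N = (i : ℝ) * T / N + T / N := by push_cast; ring
    have h2 : a (i + 1) ≤ a i + T / N := by
      calc a (i + 1) = min ((((i : ℕ) + 1 : ℕ) : ℝ) * T / N) τ := rfl
        _ ≤ min ((i : ℝ) * T / N + T / N) (τ + T / N) :=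
            min_le_min (le_of_eq h1) (by linarith)
        _ = min ((i : ℝ) * T / N) τ + T / N := by rw [min_add_add_right]
        _ = a i + T / N := rfl
    linarith
  -- integrabilities
  have hwI : ∀ p q : ℝ, p ∈ Set.Icc (0:ℝ) T → q ∈ Set.Icc (0:ℝ) T →
      IntervalIntegrable (w k) volume p q :=
    fun p q hp hq => (hw k).intervalIntegrable' hT' hp hq
  have huI : ∀ p q : ℝ, p ∈ Set.Icc (0:ℝ) T → q ∈ Set.Icc (0:ℝ) T →
      IntervalIntegrable u volume p q :=
    fun p q hp hq => hu.intervalIntegrable' hT' hp hq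
  have hvI : ∀ p q : ℝ, p ∈ Set.Icc (0:ℝ) T → q ∈ Set.Icc (0:ℝ) T →
      IntervalIntegrable (fun s => u s - w k s) volume p q :=
    fun p q hp hq => (huI p q hp hq).sub (hwI p q hp hq)
  have hgI : ∀ p q : ℝ, p ∈ Set.Icc (0:ℝ) T → q ∈ Set.Icc (0:ℝ) T →
      IntervalIntegrable (fun s => (u s - w k s) • Θ s) volume p q :=
    fun p q hp hq => smulIntegrable (hvI p q hp hq) hΘc.continuousOn
  -- bound on the primitives
  have hVb : ∀ x ∈ Set.Icc (0:ℝ) T,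
      |(∫ s in (0:ℝ)..x, u s) - ∫ s in (0:ℝ)..x, w k s| ≤ η := by
    intro x hx
    have := hk x hx
    rw [Real.dist_eq] at this
    exact this.le
  -- per-piece estimate
  have hpiece : ∀ i : ℕ, ‖∫ s in a i..a (i + 1), (u s - w k s) • Θ s‖ ≤
      D * ε₁ * (a (i + 1) - a i) + 2 * η * M := by
    intro i
    have hpq : a i ≤ a (i + 1) := hamono i
    have hp : a i ∈ Set.Icc (0:ℝ) T := habound i
    have hq : a (i + 1) ∈ Set.Icc (0:ℝ) T := habound (i + 1)
    have int1 : IntervalIntegrable (fun s => (u s - w k s) • (Θ s - Θ (a i)))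
        volume (a i) (a (i + 1)) :=
      smulIntegrable (hvI _ _ hp hq) ((hΘc.sub continuous_const).continuousOn)
    have int2 : IntervalIntegrable (fun s => (u s - w k s) • Θ (a i))
        volume (a i) (a (i + 1)) :=
      smulIntegrable (hvI _ _ hp hq) continuousOn_const
    have hsplit : (∫ s in a i..a (i + 1), (u s - w k s) • Θ s)
        = (∫ s in a i..a (i + 1), (u s - w k s) • (Θ s - Θ (a i)))
          + (∫ s in a i..a (i + 1), (u s - w k s)) • Θ (a i) := by
      rw [← intervalIntegral.integral_smul_const, ← intervalIntegral.integral_add int1 int2]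
      apply intervalIntegral.integral_congr
      intro s _
      simp only [smul_sub]
      abel
    rw [hsplit]
    refine le_trans (norm_add_le _ _) (add_le_add ?_ ?_)
    · have hb : ∀ s ∈ Set.uIoc (a i) (a (i + 1)),
          ‖(u s - w k s) • (Θ s - Θ (a i))‖ ≤ D * ε₁ := by
        intro s hs
        rw [Set.uIoc_of_le hpq] at hs
        have hsIcc : s ∈ Set.Icc (0:ℝ) T := ⟨le_trans hp.1 hs.1.le, le_trans hs.2 hq.2⟩
        have h1 : |u s - w k s| ≤ D := by
          have hb1 := hCub s hsIcc
          have hb2 := hwbound k s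
          have := abs_sub (u s) (w k s)
          simp only [hD]
          linarith
        have h2 : ‖Θ s - Θ (a i)‖ ≤ ε₁ := by
          have hd : dist s (a i) < δ := by
            rw [Real.dist_eq, abs_of_nonneg (by linarith [hs.1.le] : (0:ℝ) ≤ s - a i)]
            have := halen i
            linarith [hs.2]
          have := hδ s hsIcc (a i) hp hd
          rw [dist_eq_norm] at this
          exact this.le
        calc ‖(u s - w k s) • (Θ s - Θ (a i))‖
            = |u s - w k s| * ‖Θ s - Θ (a i)‖ := by rw [norm_smul, Real.norm_eq_abs]
          _ ≤ D * ε₁ := mul_le_mul h1 h2 (norm_nonneg _) hD0.le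
      calc ‖∫ s in a i..a (i + 1), (u s - w k s) • (Θ s - Θ (a i))‖
          ≤ D * ε₁ * |a (i + 1) - a i| :=
            intervalIntegral.norm_integral_le_of_norm_le_const hb
        _ = D * ε₁ * (a (i + 1) - a i) := by rw [abs_of_nonneg (by linarith)]
    · have hval : (∫ s in a i..a (i + 1), (u s - w k s))
          = ((∫ s in (0:ℝ)..a (i + 1), u s) - ∫ s in (0:ℝ)..a (i + 1), w k s)
            - ((∫ s in (0:ℝ)..a i, u s) - ∫ s in (0:ℝ)..a i, w k s) := by
        rw [intervalIntegral.integral_sub (huI _ _ hp hq) (hwI _ _ hp hq),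
          ← intervalIntegral.integral_interval_sub_left (huI 0 _ h0mem hq) (huI 0 _ h0mem hp),
          ← intervalIntegral.integral_interval_sub_left (hwI 0 _ h0mem hq) (hwI 0 _ h0mem hp)]
        ring
      have habs : |∫ s in a i..a (i + 1), (u s - w k s)| ≤ 2 * η := by
        rw [hval]
        have h1 := hVb (a (i + 1)) hq
        have h2 := hVb (a i) hp
        have := abs_sub ((∫ s in (0:ℝ)..a (i + 1), u s) - ∫ s in (0:ℝ)..a (i + 1), w k s)
          ((∫ s in (0:ℝ)..a i, u s) - ∫ s in (0:ℝ)..a i, w k s)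
        linarith
      calc ‖(∫ s in a i..a (i + 1), (u s - w k s)) • Θ (a i)‖
          = |∫ s in a i..a (i + 1), (u s - w k s)| * ‖Θ (a i)‖ := by
            rw [norm_smul, Real.norm_eq_abs]
        _ ≤ (2 * η) * M := mul_le_mul habs (hM _ hp) (norm_nonneg _) (by linarith)
        _ = 2 * η * M := by ring
  -- assemble
  have intU : IntervalIntegrable (fun s => u s • Θ s) volume 0 τ :=
    smulIntegrable (huI 0 τ h0mem hτ) hΘc.continuousOn
  have intW : IntervalIntegrable (fun s => w k s • Θ s) volume 0 τ :=
    smulIntegrable (hwI 0 τ h0mem hτ) hΘc.continuousOn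
  have hkey : (∫ s in (0:ℝ)..τ, u s • Θ s) - (∫ s in (0:ℝ)..τ, w k s • Θ s)
      = ∑ i ∈ Finset.range N, ∫ s in a i..a (i + 1), (u s - w k s) • Θ s := by
    have h1 : (∫ s in (0:ℝ)..τ, u s • Θ s) - (∫ s in (0:ℝ)..τ, w k s • Θ s)
        = ∫ s in (0:ℝ)..τ, (u s - w k s) • Θ s := by
      rw [← intervalIntegral.integral_sub intU intW]
      apply intervalIntegral.integral_congr
      intro s _
      exact (sub_smul _ _ _).symm
    rw [h1]
    rw [show (0:ℝ) = a 0 from ha0.symm, show τ = a N from haN.symm]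
    exact (intervalIntegral.sum_integral_adjacent_intervals
      (fun i _ => hgI (a i) (a (i + 1)) (habound i) (habound (i + 1)))).symm
  rw [dist_eq_norm, hkey]
  have hsum : ‖∑ i ∈ Finset.range N, ∫ s in a i..a (i + 1), (u s - w k s) • Θ s‖
      ≤ D * ε₁ * T + (N : ℝ) * (2 * η * M) := by
    calc ‖∑ i ∈ Finset.range N, ∫ s in a i..a (i + 1), (u s - w k s) • Θ s‖
        ≤ ∑ i ∈ Finset.range N, ‖∫ s in a i..a (i + 1), (u s - w k s) • Θ s‖ :=
          norm_sum_le _ _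
      _ ≤ ∑ i ∈ Finset.range N, (D * ε₁ * (a (i + 1) - a i) + 2 * η * M) :=
          Finset.sum_le_sum fun i _ => hpiece i
      _ = D * ε₁ * (a N - a 0) + (N : ℝ) * (2 * η * M) := by
          rw [Finset.sum_add_distrib, ← Finset.mul_sum, Finset.sum_range_sub,
            Finset.sum_const, Finset.card_range, nsmul_eq_mul]
      _ ≤ D * ε₁ * T + (N : ℝ) * (2 * η * M) := by
          have h1 : a N - a 0 ≤ T := by rw [ha0, haN]; linarith [hτ.2]
          have h2 : 0 ≤ D * ε₁ := by positivity
          nlinarith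
  have hden1 : (0:ℝ) < 3 * (D * T + 1) := by nlinarith
  have hden2 : (0:ℝ) < 3 * (2 * M * N + 1) := by
    nlinarith [mul_nonneg (mul_nonneg (by norm_num : (0:ℝ) ≤ 2) hM0) hNR.le]
  have e1 : D * ε₁ * T ≤ ε / 3 := by
    rw [hε₁def]
    rw [show D * (ε / (3 * (D * T + 1))) * T = D * T * ε / (3 * (D * T + 1)) from by ring]
    rw [div_le_div_iff₀ hden1 (by norm_num : (0:ℝ) < 3)]
    linarith [hε]
  have e2 : (N : ℝ) * (2 * η * M) ≤ ε / 3 := by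
    rw [hηdef]
    rw [show (N : ℝ) * (2 * (ε / (3 * (2 * M * N + 1))) * M)
        = 2 * M * N * ε / (3 * (2 * M * N + 1)) from by ring]
    rw [div_le_div_iff₀ hden2 (by norm_num : (0:ℝ) < 3)]
    linarith [hε]
  calc ‖∑ i ∈ Finset.range N, ∫ s in a i..a (i + 1), (u s - w k s) • Θ s‖
      ≤ D * ε₁ * T + (N : ℝ) * (2 * η * M) := hsum
    _ ≤ ε / 3 + ε / 3 := add_le_add e1 e2
    _ < ε := by linarith
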